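/- Let G be a bounded metric operator on H and S a closed densely defined operator in H. Define K on D(K) = G^{1/2}(D(S)) by Kξ = G^{1/2} S G^{-1/2} ξ. Then K is densely defined and its adjoint is K* = G^{-1/2} S* G^{1/2}, i.e., D(K*) = { η : G^{1/2}η ∈ D(S*), S*G^{1/2}η ∈ D(G^{-1/2}) } and K*η = G^{-1/2} S* G^{1/2} η. -/

import Mathlib

open scoped InnerProductSpace

/-- Let `G` be a bounded metric operator on `H` with positive square root `Ghalf`
(`G⁻¹` possibly unbounded), and `S` a closed densely defined operator. Let
`K = G^{1/2} S G^{-1/2}` on `D(K) = G^{1/2}(D(S))`, i.e. `K (Ghalf ξ) = Ghalf (S ξ)`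
for `ξ ∈ D(S)`. Then `K` is densely defined and `K* = G^{-1/2} S* G^{1/2}`, i.e.
`D(K*) = { η : Ghalf η ∈ D(S*), S* Ghalf η ∈ D(G^{-1/2}) = range Ghalf }` and
`Ghalf (K* η) = S* (Ghalf η)`. -/
theorem adjoint_of_halfConjugated {H : Type*}
    [NormedAddCommGroup H] [InnerProductSpace ℂ H] [CompleteSpace H]
    (G Ghalf : H →L[ℂ] H)
    (hG : IsSelfAdjoint G)
    (hGpos : ∀ ξ : H, ξ ≠ 0 → 0 < (⟪G ξ, ξ⟫_ℂ).re)
    (hGh : IsSelfAdjoint Ghalf)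
    (hGhpos : ∀ ξ : H, ξ ≠ 0 → 0 < (⟪Ghalf ξ, ξ⟫_ℂ).re)
    (hsq : Ghalf.comp Ghalf = G)
    (S : H →ₗ.[ℂ] H)
    (hSdense : Dense (S.domain : Set H)) (hSclosed : S.IsClosed)
    (Kop : H →ₗ.[ℂ] H)
    (hKdom : Kop.domain = S.domain.map (Ghalf : H →ₗ[ℂ] H))
    (hKval : ∀ (ξ : S.domain) (h : Ghalf (ξ : H) ∈ Kop.domain),
      Kop ⟨Ghalf (ξ : H), h⟩ = Ghalf (S ξ)) :
    Dense (Kop.domain : Set H) ∧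
    (∀ η : H, η ∈ Kop.adjoint.domain ↔
      ∃ h : Ghalf η ∈ S.adjoint.domain,
        S.adjoint ⟨Ghalf η, h⟩ ∈ Set.range Ghalf) ∧
    (∀ (η : Kop.adjoint.domain) (h : Ghalf (η : H) ∈ S.adjoint.domain),
      Ghalf (Kop.adjoint η) = S.adjoint ⟨Ghalf (η : H), h⟩) := by
  -- Self-adjointness of `Ghalf` as an inner product identity
  have hsa : ∀ x y : H, ⟪Ghalf x, y⟫_ℂ = ⟪x, Ghalf y⟫_ℂ := by
    intro x y
    nth_rewrite 2 [← hGh.adjoint_eq]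
    rw [ContinuousLinearMap.adjoint_inner_right]
  -- Injectivity of `Ghalf`
  have hinj : ∀ x : H, Ghalf x = 0 → x = 0 := by
    intro x hx
    by_contra hx0
    have := hGhpos x hx0
    rw [hx, inner_zero_left] at this
    simp at this
  -- Membership of `Ghalf ξ` in `Kop.domain` for `ξ ∈ S.domain`
  have hmemK : ∀ ξ : S.domain, Ghalf (ξ : H) ∈ Kop.domain := by
    intro ξ
    rw [hKdom]
    exact Submodule.mem_map.2 ⟨(ξ : H), ξ.2, rfl⟩
  -- Density of `Kop.domain`
  have hKdense : Dense (Kop.domain : Set H) := by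
    rw [Submodule.dense_iff_topologicalClosure_eq_top,
      Submodule.topologicalClosure_eq_top_iff]
    rw [Submodule.eq_bot_iff]
    intro η hη
    have h0 : Ghalf η = 0 := by
      refine hSdense.eq_zero_of_inner_right ℂ (fun v hv =>
        (fun h : ∀ ξ : S.domain, ⟪(ξ : H), Ghalf η⟫_ℂ = 0 => h ⟨v, hv⟩) ?_)
      intro ξ
      have := hη (Ghalf (ξ : H)) (hmemK ξ)
      rw [← hsa]; exact this
    exact hinj η h0
  have hKadj := LinearPMap.adjoint_isFormalAdjoint hKdense
  have hSadj := LinearPMap.adjoint_isFormalAdjoint hSdense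
  -- the key computation
  have hmain : ∀ (η : Kop.adjoint.domain) (ξ : S.domain),
      ⟪Ghalf (Kop.adjoint η), (ξ : H)⟫_ℂ = ⟪Ghalf (η : H), S ξ⟫_ℂ := by
    intro η ξ
    calc ⟪Ghalf (Kop.adjoint η), (ξ : H)⟫_ℂ
        = ⟪Kop.adjoint η, Ghalf (ξ : H)⟫_ℂ := hsa _ _
      _ = ⟪(η : H), Kop ⟨Ghalf (ξ : H), hmemK ξ⟩⟫_ℂ := hKadj η ⟨Ghalf (ξ : H), hmemK ξ⟩
      _ = ⟪(η : H), Ghalf (S ξ)⟫_ℂ := by rw [hKval ξ (hmemK ξ)]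
      _ = ⟪Ghalf (η : H), S ξ⟫_ℂ := (hsa _ _).symm
  refine ⟨hKdense, ?_, ?_⟩
  · intro η
    constructor
    · intro hη
      set η' : Kop.adjoint.domain := ⟨η, hη⟩
      have hmemS : Ghalf η ∈ S.adjoint.domain :=
        LinearPMap.mem_adjoint_domain_of_exists _
          ⟨Ghalf (Kop.adjoint η'), fun ξ => hmain η' ξ⟩
      exact ⟨hmemS, Kop.adjoint η',
        (LinearPMap.adjoint_apply_eq hSdense ⟨Ghalf η, hmemS⟩ (fun ξ => hmain η' ξ)).symm⟩
    · rintro ⟨h, ζ, hζ⟩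
      apply LinearPMap.mem_adjoint_domain_of_exists
      refine ⟨ζ, ?_⟩
      intro x
      have hx : (x : H) ∈ S.domain.map (Ghalf : H →ₗ[ℂ] H) := hKdom ▸ x.2
      obtain ⟨ξ, hξ, hxeq⟩ := Submodule.mem_map.1 hx
      set ξ' : S.domain := ⟨ξ, hξ⟩
      have hxval : Kop x = Ghalf (S ξ') := by
        have hx2 : Ghalf (ξ' : H) ∈ Kop.domain := hmemK ξ'
        have : x = ⟨Ghalf (ξ' : H), hx2⟩ := Subtype.ext hxeq.symm
        rw [this, hKval ξ' hx2]
      calc ⟪ζ, (x : H)⟫_ℂ = ⟪ζ, Ghalf ξ⟫_ℂ := by rw [← hxeq]; rfl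
        _ = ⟪Ghalf ζ, (ξ' : H)⟫_ℂ := (hsa _ _).symm
        _ = ⟪S.adjoint ⟨Ghalf η, h⟩, (ξ' : H)⟫_ℂ := by rw [hζ]
        _ = ⟪Ghalf η, S ξ'⟫_ℂ := hSadj ⟨Ghalf η, h⟩ ξ'
        _ = ⟪η, Ghalf (S ξ')⟫_ℂ := hsa _ _
        _ = ⟪η, Kop x⟫_ℂ := by rw [hxval]
  · intro η h
    exact (LinearPMap.adjoint_apply_eq hSdense ⟨Ghalf (η : H), h⟩ (fun ξ => hmain η ξ)).symm
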